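/- Let 𝔽 be a field, let P(λ) = P_kλ^k + ⋯ + P_1λ + P_0 ∈ 𝔽[λ]^{p×m} with k ≥ 2, and let C₁(λ) be the Frobenius companion form of P(λ). Partition rev₁C₁(λ) = [[D_r(λ), −C_r(λ)],[B_r(λ), A_r(λ)]] where D_r(λ) = P_k + λP_{k−1}, −C_r(λ) = [λP_{k−2}, …, λP_1, λP_0], B_r(λ) = [−λI_m; 0; …; 0], and A_r(λ) ∈ 𝔽[λ]^{(k−1)m×(k−1)m} has diagonal blocks I_m and subdiagonal blocks −λI_m. Then A_r(λ) is unimodular and the Schur complement D_r(λ) + C_r(λ)A_r(λ)⁻¹B_r(λ) equals rev_kP(λ) = P_k + λP_{k−1} + λ²P_{k−2} + ⋯ + λ^kP_0. -/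
import Mathlib


open Polynomial Matrix

section AuxShift

noncomputable def shA (F : Type*) [Field F] (n m : ℕ) :
    Matrix (Fin (n+1) × Fin m) (Fin (n+1) × Fin m) (Polynomial F) :=
  Matrix.of fun r c =>
    if r.2 = c.2 then
      (if r.1 = c.1 then 1
       else if (r.1 : ℕ) = (c.1 : ℕ) + 1 then -(Polynomial.X : Polynomial F) else 0)
    else 0

noncomputable def shAinv (F : Type*) [Field F] (n m : ℕ) :
    Matrix (Fin (n+1) × Fin m) (Fin (n+1) × Fin m) (Polynomial F) :=
  Matrix.of fun r c =>
    if r.2 = c.2 ∧ (c.1 : ℕ) ≤ (r.1 : ℕ) then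
      (Polynomial.X : Polynomial F) ^ ((r.1 : ℕ) - (c.1 : ℕ)) else 0

noncomputable def shV (F : Type*) [Field F] (n m : ℕ) :
    Matrix (Fin (n+1) × Fin m) (Fin m) (Polynomial F) :=
  Matrix.of fun r j =>
    if r.2 = j then -((Polynomial.X : Polynomial F) ^ ((r.1 : ℕ) + 1)) else 0

noncomputable def shBr (F : Type*) [Field F] (n m : ℕ) :
    Matrix (Fin (n+1) × Fin m) (Fin m) (Polynomial F) :=
  Matrix.of fun r j =>
    if (r.1 : ℕ) = 0 ∧ r.2 = j then -(Polynomial.X : Polynomial F) else 0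

variable {F : Type*} [Field F] {m n : ℕ}

lemma shA_row_sum_zero (g : Fin (n+1) × Fin m → Polynomial F) (r : Fin (n+1) × Fin m)
    (h0 : (r.1 : ℕ) = 0) :
    ∑ x, shA F n m r x * g x = g r := by
  have key : ∀ x : Fin (n+1) × Fin m, shA F n m r x * g x
      = if x = r then g x else 0 := by
    intro x
    by_cases e2 : r.2 = x.2
    · by_cases e1 : r.1 = x.1
      · have ex : x = r := Prod.ext_iff.mpr ⟨e1.symm, e2.symm⟩
        simp [shA, e2, e1, ex]
      · have e4 : ¬(r.1 : ℕ) = (x.1 : ℕ) + 1 := by omega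
        have ex : ¬x = r := fun h => e1 (by rw [h])
        simp [shA, e2, e1, e4, ex]
    · have ex : ¬x = r := fun h => e2 (by rw [h])
      simp [shA, e2, ex]
  rw [Finset.sum_congr rfl fun x _ => key x, Finset.sum_ite_eq' Finset.univ r g]
  simp

lemma shA_row_sum_succ (g : Fin (n+1) × Fin m → Polynomial F) (r r' : Fin (n+1) × Fin m)
    (h2 : r'.2 = r.2) (hj : (r.1 : ℕ) = (r'.1 : ℕ) + 1) :
    ∑ x, shA F n m r x * g x = g r - Polynomial.X * g r' := by
  have hne : ¬(r' = r) := by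
    intro h; rw [h] at hj; omega
  have hne' : ¬(r = r') := fun h => hne h.symm
  have hne1 : ¬(r.1 = r'.1) := by
    intro h; rw [h] at hj; omega
  have key : ∀ x : Fin (n+1) × Fin m, shA F n m r x * g x =
      (if x = r then g x else 0) +
      (if x = r' then -(Polynomial.X : Polynomial F) * g x else 0) := by
    intro x
    by_cases e2 : r.2 = x.2
    · by_cases e1 : r.1 = x.1
      · have ex : x = r := Prod.ext_iff.mpr ⟨e1.symm, e2.symm⟩
        have ex' : ¬x = r' := by rw [ex]; exact fun h => hne h.symm
        simp [shA, e2, e1, ex, ex', hne, hne', hne1]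
      · by_cases e4 : (r.1 : ℕ) = (x.1 : ℕ) + 1
        · have ex : ¬x = r := fun h => e1 (by rw [h])
          have ex' : x = r' := by
            refine Prod.ext_iff.mpr ⟨Fin.ext ?_, by rw [← e2, h2]⟩
            omega
          simp [shA, e2, e1, e4, ex, ex', hne, hne', hne1]
        · have ex : ¬x = r := fun h => e1 (by rw [h])
          have ex' : ¬x = r' := by
            intro h
            exact e4 (by rw [h]; omega)
          simp [shA, e2, e1, e4, ex, ex']
    · have ex : ¬x = r := fun h => e2 (by rw [h])
      have ex' : ¬x = r' := by
        intro h; rw [h, h2] at e2; exact e2 rfl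
      simp [shA, e2, ex, ex']
  rw [Finset.sum_congr rfl fun x _ => key x, Finset.sum_add_distrib,
    Finset.sum_ite_eq' Finset.univ r g,
    Finset.sum_ite_eq' Finset.univ r' (fun x => -(Polynomial.X : Polynomial F) * g x)]
  simp only [Finset.mem_univ, if_true]
  ring

lemma shAinv_sub (r r' c : Fin (n+1) × Fin m)
    (h2 : r'.2 = r.2) (hj : (r.1 : ℕ) = (r'.1 : ℕ) + 1) :
    shAinv F n m r c - Polynomial.X * shAinv F n m r' c
      = (1 : Matrix (Fin (n+1) × Fin m) (Fin (n+1) × Fin m) (Polynomial F)) r c := by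
  simp only [shAinv, Matrix.of_apply, Matrix.one_apply]
  by_cases ec2 : r.2 = c.2
  · by_cases el : (c.1 : ℕ) ≤ (r'.1 : ℕ)
    · have el2 : (c.1 : ℕ) ≤ (r.1 : ℕ) := by omega
      have hrc : ¬r = c := by intro h; rw [h] at hj; omega
      rw [if_pos ⟨ec2, el2⟩, if_pos ⟨h2.trans ec2, el⟩, if_neg hrc]
      have he : (r.1 : ℕ) - (c.1 : ℕ) = ((r'.1 : ℕ) - (c.1 : ℕ)) + 1 := by omega
      rw [he, pow_succ]; ring
    · by_cases el2 : (c.1 : ℕ) ≤ (r.1 : ℕ)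
      · have hrc : r = c := Prod.ext_iff.mpr ⟨Fin.ext (by omega), ec2⟩
        rw [if_pos ⟨ec2, el2⟩, if_neg (fun h => el h.2), if_pos hrc]
        have he : (r.1 : ℕ) - (c.1 : ℕ) = 0 := by omega
        rw [he, pow_zero]; ring
      · have hrc : ¬r = c := fun h => el2 (by rw [h])
        rw [if_neg (fun h => el2 h.2), if_neg (fun h => el h.2), if_neg hrc]; ring
  · have hrc : ¬r = c := fun h => ec2 (by rw [h])
    have hc2 : ¬r'.2 = c.2 := fun h => ec2 (h2.symm.trans h)
    rw [if_neg (fun h => ec2 h.1), if_neg (fun h => hc2 h.1), if_neg hrc]; ring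

lemma shA_mul_shAinv : shA F n m * shAinv F n m = 1 := by
  apply Matrix.ext; intro r c
  rw [Matrix.mul_apply]
  rcases h0 : (r.1 : ℕ) with _ | j
  · rw [shA_row_sum_zero (fun x => shAinv F n m x c) r h0]
    simp only [shAinv, Matrix.of_apply, Matrix.one_apply]
    by_cases ec2 : r.2 = c.2
    · by_cases el : (c.1 : ℕ) ≤ (r.1 : ℕ)
      · have hrc : r = c := Prod.ext_iff.mpr ⟨Fin.ext (by omega), ec2⟩
        rw [if_pos ⟨ec2, el⟩, if_pos hrc]
        have he : (r.1 : ℕ) - (c.1 : ℕ) = 0 := by omega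
        rw [he, pow_zero]
      · have hrc : ¬r = c := fun h => el (by rw [h])
        rw [if_neg (fun h => el h.2), if_neg hrc]
    · have hrc : ¬r = c := fun h => ec2 (by rw [h])
      rw [if_neg (fun h => ec2 h.1), if_neg hrc]
  · have hjlt : j < n + 1 := by omega
    rw [shA_row_sum_succ (fun x => shAinv F n m x c) r (⟨j, hjlt⟩, r.2) rfl h0]
    exact shAinv_sub (F := F) (n := n) (m := m) r (⟨j, hjlt⟩, r.2) c rfl h0

lemma shV_sub (r r' : Fin (n+1) × Fin m) (j : Fin m)
    (h2 : r'.2 = r.2) (hj : (r.1 : ℕ) = (r'.1 : ℕ) + 1) :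
    shV F n m r j - Polynomial.X * shV F n m r' j = shBr F n m r j := by
  simp only [shV, shBr, Matrix.of_apply]
  by_cases e : r.2 = j
  · rw [if_pos e, if_pos (h2.trans e), if_neg (fun h => by omega)]
    rw [hj, pow_succ]; ring
  · rw [if_neg e, if_neg (fun h => e (h2.symm.trans h)), if_neg (fun h => e h.2)]
    ring

lemma shA_mul_shV : shA F n m * shV F n m = shBr F n m := by
  apply Matrix.ext; intro r j
  rw [Matrix.mul_apply]
  rcases h0 : (r.1 : ℕ) with _ | j0
  · rw [shA_row_sum_zero (fun x => shV F n m x j) r h0]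
    simp only [shV, shBr, Matrix.of_apply]
    by_cases e : r.2 = j
    · rw [if_pos e, if_pos ⟨h0, e⟩, h0, zero_add, pow_one]
    · rw [if_neg e, if_neg (fun h => e h.2)]
  · have hjlt : j0 < n + 1 := by omega
    rw [shA_row_sum_succ (fun x => shV F n m x j) r (⟨j0, hjlt⟩, r.2) rfl h0]
    exact shV_sub (F := F) (n := n) (m := m) r (⟨j0, hjlt⟩, r.2) j rfl h0


lemma shAinv_mul_shBr : (shA F n m)⁻¹ * shBr F n m = shV F n m := by
  have hdet : IsUnit (shA F n m).det :=
    Matrix.isUnit_det_of_right_inverse shA_mul_shAinv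
  calc (shA F n m)⁻¹ * shBr F n m
      = (shA F n m)⁻¹ * (shA F n m * shV F n m) := by rw [shA_mul_shV]
    _ = ((shA F n m)⁻¹ * shA F n m) * shV F n m := by rw [Matrix.mul_assoc]
    _ = shV F n m := by rw [Matrix.nonsing_inv_mul _ hdet, Matrix.one_mul]

lemma schur_eq {p : ℕ} (Pc : ℕ → Matrix (Fin p) (Fin m) F) :
    ((Pc (n+2)).map Polynomial.C +
        (Polynomial.X : Polynomial F) • (Pc (n+1)).map Polynomial.C) +
      (-(Matrix.of fun i (c : Fin (n+1) × Fin m) =>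
          Polynomial.X * Polynomial.C (Pc (n - (c.1 : ℕ)) i c.2))) * shV F n m
    = ∑ i' ∈ Finset.range (n+3),
        ((Polynomial.X : Polynomial F) ^ (n + 2 - i')) • (Pc i').map Polynomial.C := by
  apply Matrix.ext; intro i j
  rw [Matrix.add_apply, Matrix.mul_apply]
  have key : ∀ x : Fin (n+1) × Fin m,
      (-(Matrix.of fun i (c : Fin (n+1) × Fin m) => Polynomial.X *
          Polynomial.C (Pc (n - (c.1 : ℕ)) i c.2))) i x * shV F n m x j
      = if x.2 = j then (Polynomial.X : Polynomial F) ^ ((x.1 : ℕ) + 2) *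
          Polynomial.C (Pc (n - (x.1 : ℕ)) i x.2) else 0 := by
    intro x
    simp only [Matrix.neg_apply, Matrix.of_apply, shV]
    by_cases e : x.2 = j
    · rw [if_pos e, if_pos e, pow_succ, pow_succ]
      ring
    · rw [if_neg e, if_neg e, mul_zero]
  rw [Finset.sum_congr rfl fun x _ => key x]
  rw [Fintype.sum_prod_type]
  have col : ∀ a : Fin (n+1),
      (∑ b : Fin m, if b = j then (Polynomial.X : Polynomial F) ^ ((a : ℕ) + 2) *
          Polynomial.C (Pc (n - (a : ℕ)) i b) else 0)
      = (Polynomial.X : Polynomial F) ^ ((a : ℕ) + 2) *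
          Polynomial.C (Pc (n - (a : ℕ)) i j) := by
    intro a
    rw [Finset.sum_ite_eq' Finset.univ j
      (fun b => (Polynomial.X : Polynomial F) ^ ((a : ℕ) + 2) *
        Polynomial.C (Pc (n - (a : ℕ)) i b))]
    simp
  rw [Finset.sum_congr rfl fun a _ => col a]
  rw [Matrix.sum_apply]
  simp only [Matrix.smul_apply, Matrix.map_apply, smul_eq_mul, Matrix.add_apply]
  rw [show n + 3 = (n + 1) + 1 + 1 from rfl, Finset.sum_range_succ, Finset.sum_range_succ]
  have e1 : n + 2 - (n + 1) = 1 := by omega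
  have e2 : n + 2 - (n + 2) = 0 := by omega
  rw [e1, e2, pow_one, pow_zero, one_mul]
  have lhs_sum : ∑ a : Fin (n+1), (Polynomial.X : Polynomial F) ^ ((a : ℕ) + 2) *
      Polynomial.C (Pc (n - (a : ℕ)) i j)
      = ∑ i' ∈ Finset.range (n+1), (Polynomial.X : Polynomial F) ^ (n + 2 - i') *
          Polynomial.C (Pc i' i j) := by
    rw [Fin.sum_univ_eq_sum_range (fun a => (Polynomial.X : Polynomial F) ^ (a + 2) *
      Polynomial.C (Pc (n - a) i j)) (n+1)]
    rw [← Finset.sum_range_reflect (fun i' => (Polynomial.X : Polynomial F) ^ (n + 2 - i') *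
      Polynomial.C (Pc i' i j)) (n+1)]
    refine Finset.sum_congr rfl fun a ha => ?_
    rw [Finset.mem_range] at ha
    have h1 : n + 1 - 1 - a = n - a := by omega
    have h2 : n + 2 - (n - a) = a + 2 := by omega
    rw [h1, h2]
  rw [lhs_sum]
  ring

end AuxShift

/-- The reversal `rev₁ C₁(λ)` of the Frobenius companion form of
`P(λ) = P_k λ^k + ⋯ + P_0`, partitioned as `[[D_r, -C_r], [B_r, A_r]]` with state matrix
`A_r(λ)`, has `A_r(λ)` unimodular and Schur complement
`D_r + C_r A_r⁻¹ B_r = rev_k P(λ) = P_k + λ P_{k-1} + ⋯ + λ^k P_0`. -/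
theorem stmt_6 {F : Type*} [Field F] {p m k : ℕ} (hk : 2 ≤ k)
    (Pc : ℕ → Matrix (Fin p) (Fin m) F)
    (P : Matrix (Fin p) (Fin m) (Polynomial F))
    (hP : P = ∑ i ∈ Finset.range (k+1),
      ((Polynomial.X : Polynomial F) ^ i) • (Pc i).map Polynomial.C)
    -- `D_r(λ) = P_k + λ P_{k-1}`
    (Dr : Matrix (Fin p) (Fin m) (Polynomial F))
    (hDr : Dr = (Pc k).map Polynomial.C +
      (Polynomial.X : Polynomial F) • (Pc (k-1)).map Polynomial.C)
    -- `-C_r(λ) = [λ P_{k-2}, …, λ P_1, λ P_0]`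
    (mCr : Matrix (Fin p) (Fin (k-1) × Fin m) (Polynomial F))
    (hmCr : mCr = Matrix.of fun i c =>
      Polynomial.X * Polynomial.C (Pc (k-2-(c.1 : ℕ)) i c.2))
    -- `B_r(λ) = [-λ I_m; 0; …; 0]`
    (Br : Matrix (Fin (k-1) × Fin m) (Fin m) (Polynomial F))
    (hBr : Br = Matrix.of fun r j =>
      if (r.1 : ℕ) = 0 ∧ r.2 = j then -(Polynomial.X : Polynomial F) else 0)
    -- `A_r(λ)`: diagonal blocks `I_m`, subdiagonal blocks `-λ I_m`
    (Ar : Matrix (Fin (k-1) × Fin m) (Fin (k-1) × Fin m) (Polynomial F))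
    (hAr : Ar = Matrix.of fun r c =>
      if r.2 = c.2 then
        (if r.1 = c.1 then 1
         else if (r.1 : ℕ) = (c.1 : ℕ) + 1 then -(Polynomial.X : Polynomial F) else 0)
      else 0) :
    -- `A_r(λ)` is unimodular
    IsUnit Ar.det ∧
    -- the Schur complement `D_r + C_r A_r⁻¹ B_r` equals `rev_k P(λ)` (here `C_r = -mCr`)
    Dr + (-mCr) * Ar⁻¹ * Br = ∑ i ∈ Finset.range (k+1),
      ((Polynomial.X : Polynomial F) ^ (k-i)) • (Pc i).map Polynomial.C := by
  obtain ⟨n, rfl⟩ : ∃ n, k = n + 2 := ⟨k - 2, by omega⟩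
  clear hk hP
  have hA : Ar = shA F n m := hAr
  have hB : Br = shBr F n m := hBr
  have hdet : IsUnit Ar.det := by
    rw [hA]
    exact Matrix.isUnit_det_of_right_inverse shA_mul_shAinv
  refine ⟨hdet, ?_⟩
  have hVeq : Ar⁻¹ * Br = shV F n m := by
    rw [hA, hB]; exact shAinv_mul_shBr
  rw [Matrix.mul_assoc, hVeq, hDr, hmCr]
  exact schur_eq Pc
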